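/- Lower bound on the number of potential-1 states: for K a power of 2, the number of (K+1)-tuples of nonnegative integers (n_0,...,n_K) with Σ n_i 2^{-(K-i)} = 1 is at least 2^{cK^2} for some constant c > 0 (e.g., c = 1/8 for large K). In particular, the count grows like 2^{Θ(K^2)}. -/

import Mathlib

open Finset

private def gfun (T : ℕ) (b : ℕ → ℕ) (i : ℕ) : ℕ :=
  if i < 2 * T then
    (if i % 2 = 1 then b (i / 2) else 2 ^ (4 * T - 1 - 3 * (i / 2)) - 2 * b (i / 2))
  else if i = 2 * T then 2 ^ T else 0

private lemma gfun_odd (T : ℕ) (b : ℕ → ℕ) (j : ℕ) (hj : j < T) :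
    gfun T b (2 * j + 1) = b j := by
  unfold gfun
  rw [if_pos (by omega), if_pos (by omega)]
  congr 1
  omega

private lemma gfun_even (T : ℕ) (b : ℕ → ℕ) (j : ℕ) (hj : j < T) :
    gfun T b (2 * j) = 2 ^ (4 * T - 1 - 3 * j) - 2 * b j := by
  unfold gfun
  rw [if_pos (by omega), if_neg (by omega)]
  have h2 : 2 * j / 2 = j := by omega
  rw [h2]

private lemma sumPairAux (h : ℕ → ℕ) (T : ℕ) :
    ∑ i ∈ range (2 * T), h i = ∑ j ∈ range T, (h (2 * j) + h (2 * j + 1)) := by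
  induction T with
  | zero => simp
  | succ n ih =>
      rw [Nat.mul_succ, sum_range_succ, sum_range_succ, sum_range_succ, ih, add_assoc]

private lemma two_pow_sum (n : ℕ) : ∑ j ∈ range n, 2 ^ j = 2 ^ n - 1 := by
  induction n with
  | zero => simp
  | succ n ih =>
      rw [sum_range_succ, ih, pow_succ]
      have := Nat.one_le_two_pow (n := n)
      omega

private lemma gfun_sum (T : ℕ) (b : ℕ → ℕ) (hb : ∀ j, j < T → b j ≤ 2 ^ T) :
    ∑ i ∈ range (4 * T + 1), gfun T b i * 2 ^ i = 2 ^ (4 * T) := by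
  have hsplit : ∑ i ∈ range (2 * T), gfun T b i * 2 ^ i
      + ∑ i ∈ Ico (2 * T) (4 * T + 1), gfun T b i * 2 ^ i
      = ∑ i ∈ range (4 * T + 1), gfun T b i * 2 ^ i := by
    rw [range_eq_Ico, range_eq_Ico]
    exact Finset.sum_Ico_consecutive _ (by omega) (by omega)
  rw [← hsplit]
  -- second part
  have htail : ∑ i ∈ Ico (2 * T) (4 * T + 1), gfun T b i * 2 ^ i = 2 ^ (3 * T) := by
    rw [Finset.sum_eq_single_of_mem (2 * T) (by simp [Finset.mem_Ico]; omega)]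
    · unfold gfun
      rw [if_neg (by omega), if_pos rfl, ← pow_add]
      congr 1
      omega
    · intro i hi hne
      unfold gfun
      rw [if_neg (by simp [Finset.mem_Ico] at hi; omega), if_neg hne]
      simp
  rw [htail, sumPairAux]
  -- first part: each block contributes 2^(4T-1-j)
  have hblock : ∀ j ∈ range T,
      gfun T b (2 * j) * 2 ^ (2 * j) + gfun T b (2 * j + 1) * 2 ^ (2 * j + 1)
        = 2 ^ (4 * T - 1 - j) := by
    intro j hj
    rw [Finset.mem_range] at hj
    rw [gfun_even T b j hj, gfun_odd T b j hj]
    have hA : T + 1 ≤ 4 * T - 1 - 3 * j := by omega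
    have hble : 2 * b j ≤ 2 ^ (4 * T - 1 - 3 * j) := by
      calc 2 * b j ≤ 2 * 2 ^ T := by have := hb j hj; omega
        _ = 2 ^ (T + 1) := by rw [pow_succ]; ring
        _ ≤ 2 ^ (4 * T - 1 - 3 * j) := Nat.pow_le_pow_right (by norm_num) hA
    have h1 : b j * 2 ^ (2 * j + 1) = (2 * b j) * 2 ^ (2 * j) := by
      rw [pow_succ]; ring
    rw [h1, Nat.sub_mul, Nat.sub_add_cancel (Nat.mul_le_mul_right _ hble), ← pow_add]
    congr 1
    omega
  rw [Finset.sum_congr rfl hblock]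
  have hgeom : ∑ j ∈ range T, 2 ^ (4 * T - 1 - j) = 2 ^ (3 * T) * (2 ^ T - 1) := by
    have h1 : ∀ j ∈ range T, 2 ^ (4 * T - 1 - j) = 2 ^ (3 * T) * 2 ^ (T - 1 - j) := by
      intro j hj
      rw [Finset.mem_range] at hj
      rw [← pow_add]
      congr 1
      omega
    rw [Finset.sum_congr rfl h1, ← Finset.mul_sum,
      Finset.sum_range_reflect (fun j => 2 ^ j) T, two_pow_sum]
  rw [hgeom]
  have h2 : 2 ^ (4 * T) = 2 ^ (3 * T) * 2 ^ T := by rw [← pow_add]; congr 1; omega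
  have h3 : (1 : ℕ) ≤ 2 ^ T := Nat.one_le_two_pow
  have h4 : 2 ^ (3 * T) * (2 ^ T - 1) = 2 ^ (3 * T) * 2 ^ T - 2 ^ (3 * T) := by
    rw [Nat.mul_sub, mul_one]
  rw [h4, h2]
  have h5 : 2 ^ (3 * T) ≤ 2 ^ (3 * T) * 2 ^ T := Nat.le_mul_of_pos_right _ (by positivity)
  omega

/-- Membership in the potential-1 set is equivalent to a natural-number equation. -/

private lemma mem_iff (m : ℕ) (S : Fin (2 ^ m + 1) → ℕ) :
    (∑ i, (S i : ℝ) * (2:ℝ) ^ (-(((2:ℤ) ^ m) - (i:ℕ))) = 1) ↔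
      ∑ i, S i * 2 ^ (i : ℕ) = 2 ^ (2 ^ m) := by
  have key : ∀ i : Fin (2 ^ m + 1),
      (2:ℝ) ^ (-(((2:ℤ) ^ m) - (i:ℕ))) = 2 ^ (i : ℕ) * ((2:ℝ) ^ (2 ^ m : ℕ))⁻¹ := by
    intro i
    rw [neg_sub, zpow_sub₀ (two_ne_zero), zpow_natCast]
    have : ((2:ℤ) ^ m) = ((2 ^ m : ℕ) : ℤ) := by push_cast; ring
    rw [this, zpow_natCast]
    rw [div_eq_mul_inv]
  have hrw : ∀ i : Fin (2 ^ m + 1),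
      (S i : ℝ) * (2:ℝ) ^ (-(((2:ℤ) ^ m) - (i:ℕ)))
        = ((S i : ℝ) * 2 ^ (i : ℕ)) * ((2:ℝ) ^ (2 ^ m : ℕ))⁻¹ := by
    intro i; rw [key, mul_assoc]
  rw [Finset.sum_congr rfl (fun i _ => hrw i), ← Finset.sum_mul]
  have hne : ((2:ℝ) ^ (2 ^ m : ℕ)) ≠ 0 := by positivity
  rw [mul_inv_eq_one₀ hne]
  constructor
  · intro h
    have : ((∑ i, S i * 2 ^ (i : ℕ) : ℕ) : ℝ) = ((2 ^ (2 ^ m) : ℕ) : ℝ) := by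
      push_cast
      convert h using 2
    exact_mod_cast this
  · intro h
    have : ((∑ i, S i * 2 ^ (i : ℕ) : ℕ) : ℝ) = ((2 ^ (2 ^ m) : ℕ) : ℝ) := by
      exact_mod_cast congrArg (fun n : ℕ => (n : ℝ)) h
    push_cast at this
    convert this using 2

theorem stmt12 :
    ∃ c : ℝ, 0 < c ∧ ∃ m₀ : ℕ, ∀ m : ℕ, m₀ ≤ m →
      (2:ℝ) ^ (c * ((2 ^ m : ℕ) : ℝ) ^ 2) ≤
        (({S : Fin (2 ^ m + 1) → ℕ |
            ∑ i, (S i : ℝ) * (2:ℝ) ^ (-(((2:ℤ) ^ m) - (i:ℕ))) = 1}.ncard : ℕ) : ℝ) := by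
  refine ⟨1/16, by norm_num, 2, fun m hm => ?_⟩
  obtain ⟨k, rfl⟩ : ∃ k, m = k + 2 := ⟨m - 2, by omega⟩
  set m := k + 2 with hmm
  set T : ℕ := 2 ^ k with hTdef
  have hK : 2 ^ m = 4 * T := by
    rw [hTdef, hmm, pow_add]; ring
  set Sset : Set (Fin (2 ^ m + 1) → ℕ) :=
    {S : Fin (2 ^ m + 1) → ℕ |
      ∑ i, (S i : ℝ) * (2:ℝ) ^ (-(((2:ℤ) ^ m) - (i:ℕ))) = 1} with hSset
  -- the injection
  set f : (Fin T → Fin (2 ^ T + 1)) → (Fin (2 ^ m + 1) → ℕ) :=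
    fun b i => gfun T (fun j => if h : j < T then (b ⟨j, h⟩ : ℕ) else 0) i.val with hf
  have hbbound : ∀ (b : Fin T → Fin (2 ^ T + 1)) (j : ℕ), j < T →
      (fun j => if h : j < T then (b ⟨j, h⟩ : ℕ) else 0) j ≤ 2 ^ T := by
    intro b j hj
    simp only [dif_pos hj]
    exact Fin.is_le _
  -- each f b is a solution
  have hmem : ∀ b : Fin T → Fin (2 ^ T + 1), f b ∈ Sset := by
    intro b
    rw [hSset, Set.mem_setOf_eq, mem_iff]
    have := gfun_sum T (fun j => if h : j < T then (b ⟨j, h⟩ : ℕ) else 0) (hbbound b)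
    calc ∑ i : Fin (2 ^ m + 1), f b i * 2 ^ (i : ℕ)
        = ∑ i ∈ range (2 ^ m + 1),
            gfun T (fun j => if h : j < T then (b ⟨j, h⟩ : ℕ) else 0) i * 2 ^ i := by
          rw [Finset.sum_range fun i =>
            gfun T (fun j => if h : j < T then (b ⟨j, h⟩ : ℕ) else 0) i * 2 ^ i]
      _ = 2 ^ (2 ^ m) := by rw [hK]; exact this
  -- injectivity
  have hinj : Function.Injective f := by
    intro b b' hbb
    funext j
    have hlt : 2 * (j : ℕ) + 1 < 2 ^ m + 1 := by
      have := j.isLt; omega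
    have := congrFun hbb ⟨2 * (j : ℕ) + 1, hlt⟩
    rw [hf] at this
    simp only at this
    rw [gfun_odd T _ (j : ℕ) j.isLt, gfun_odd T _ (j : ℕ) j.isLt] at this
    simp only [dif_pos j.isLt] at this
    exact Fin.ext (by simpa using this)
  -- finiteness of Sset
  have hfin : Sset.Finite := by
    have hsub : Sset ⊆ Set.pi Set.univ (fun _ : Fin (2 ^ m + 1) => Set.Iic (2 ^ (2 ^ m))) := by
      intro S hS
      rw [hSset, Set.mem_setOf_eq, mem_iff] at hS
      intro i _
      simp only [Set.mem_Iic]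
      calc S i ≤ S i * 2 ^ (i : ℕ) := Nat.le_mul_of_pos_right _ (by positivity)
        _ ≤ ∑ i, S i * 2 ^ (i : ℕ) :=
            Finset.single_le_sum (f := fun i : Fin (2 ^ m + 1) => S i * 2 ^ (i : ℕ))
              (fun i _ => Nat.zero_le _) (Finset.mem_univ i)
        _ = 2 ^ (2 ^ m) := hS
    exact Set.Finite.subset (Set.Finite.pi fun _ => Set.finite_Iic _) hsub
  -- counting
  set F : Finset (Fin (2 ^ m + 1) → ℕ) := Finset.image f Finset.univ with hF
  have hsubF : ↑F ⊆ Sset := by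
    intro S hS
    rw [hF] at hS
    simp only [Finset.coe_image, Finset.coe_univ, Set.image_univ, Set.mem_range] at hS
    obtain ⟨b, rfl⟩ := hS
    exact hmem b
  have hcard1 : F.card ≤ Sset.ncard := by
    rw [← Set.ncard_coe_finset]
    exact Set.ncard_le_ncard hsubF hfin
  have hcard2 : F.card = (2 ^ T + 1) ^ T := by
    rw [hF, Finset.card_image_of_injective _ hinj, Finset.card_univ]
    simp [Fintype.card_fun]
  have hcard3 : 2 ^ (T * T) ≤ (2 ^ T + 1) ^ T := by
    calc 2 ^ (T * T) = (2 ^ T) ^ T := by rw [← pow_mul]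
      _ ≤ (2 ^ T + 1) ^ T := Nat.pow_le_pow_left (by omega) T
  have hcount : 2 ^ (T * T) ≤ Sset.ncard := by
    omega
  -- final real inequality
  have hexp : (1 / 16 : ℝ) * ((2 ^ m : ℕ) : ℝ) ^ 2 = ((T * T : ℕ) : ℝ) := by
    rw [hTdef, hmm]
    push_cast
    ring
  rw [hexp, Real.rpow_natCast]
  calc ((2 : ℝ)) ^ (T * T) = ((2 ^ (T * T) : ℕ) : ℝ) := by push_cast; ring
    _ ≤ ((Sset.ncard : ℕ) : ℝ) := by exact_mod_cast hcount
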